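/- Let q be a prime power, let real numbers R1, R2 satisfy 0 ≤ R2 < R1 ≤ 1 and R1 − R2 ≤ 1, and set τ = R1 − R2. Then the asymptotic metric δ_q(τ, R1, R2) = limsup_{n→∞} max{ d/n : there exist an integer t and nested linear codes C2 ⊆ C1 ⊆ F_q^n with 1 ≤ t ≤ nτ, t ≤ dim C1 − dim C2, dim C1 ≥ nR1, dim C2 ≤ nR2, and M_t(C1, C2) ≥ d } satisfies δ_q(τ, R1, R2) = 1 + τ − R1. -/

import Mathlib

/-- `V_I = {x ∈ F^n : i ∉ I → x i = 0}` -/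
noncomputable def VI (F : Type) [Field F] (n : ℕ) (I : Finset (Fin n)) :
    Submodule F (Fin n → F) :=
  Submodule.pi (↑I)ᶜ (fun _ => (⊥ : Submodule F F))

/-- the `t`-th relative generalized Hamming weight of `C₂ ⊆ C₁ ⊆ F^n` -/
noncomputable def RGHW (F : Type) [Field F] {n : ℕ} (t : ℕ)
    (C₁ C₂ : Submodule F (Fin n → F)) : ℕ :=
  sInf {d : ℕ | ∃ I : Finset (Fin n), I.card = d ∧
    Module.finrank F ↥(C₁ ⊓ VI F n I) ≥ Module.finrank F ↥(C₂ ⊓ VI F n I) + t}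

/-- `π(q) = ∏_{i=1}^∞ (1 - q^{-i})` -/
noncomputable def piq (q : ℝ) : ℝ := ∏' i : ℕ, (1 - (q ^ (i + 1))⁻¹)

/-- `N₁(w,u) = ∏_{i=0}^{u-1}(q^w - q^i) / ∏_{i=0}^{u-1}(q^u - q^i)` -/
noncomputable def N1 (q : ℝ) (w u : ℕ) : ℝ :=
  (∏ i ∈ Finset.range u, (q ^ w - q ^ i)) / (∏ i ∈ Finset.range u, (q ^ u - q ^ i))

/-- `N₂(w,u,v) = ∏_{i=0}^{v-1}(q^w - q^{u+i}) / ∏_{i=0}^{v-1}(q^v - q^i)` -/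
noncomputable def N2 (q : ℝ) (w u v : ℕ) : ℝ :=
  (∏ i ∈ Finset.range v, (q ^ w - q ^ (u + i))) / (∏ i ∈ Finset.range v, (q ^ v - q ^ i))

/-- `N₃(w,u,v,a) = N₁(u,a) · N₂(w-a, u-a, v-a)` -/
noncomputable def N3 (q : ℝ) (w u v a : ℕ) : ℝ :=
  N1 q u a * N2 q (w - a) (u - a) (v - a)

section Helpers

variable {F : Type} [Field F] {n : ℕ}

lemma mem_VI {I : Finset (Fin n)} {x : Fin n → F} :
    x ∈ VI F n I ↔ ∀ i, i ∉ I → x i = 0 := by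
  simp [VI, Submodule.mem_pi]

lemma VI_mono {I J : Finset (Fin n)} (h : I ⊆ J) : VI F n I ≤ VI F n J := by
  intro x hx
  rw [mem_VI] at *
  exact fun i hi => hx i (fun hiI => hi (h hiI))

lemma VI_univ : VI F n Finset.univ = ⊤ := by
  ext x; simp [mem_VI]

lemma VI_inf_VI (I J : Finset (Fin n)) : VI F n I ⊓ VI F n J = VI F n (I ∩ J) := by
  ext x
  simp only [Submodule.mem_inf, mem_VI, Finset.mem_inter]
  constructor
  · rintro ⟨h1, h2⟩ i hi
    by_cases hI : i ∈ I
    · exact h2 i (fun hJ => hi ⟨hI, hJ⟩)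
    · exact h1 i hI
  · exact fun h => ⟨fun i hi => h i (fun ⟨a, _⟩ => hi a), fun i hi => h i (fun ⟨_, b⟩ => hi b)⟩

/-- restriction map to coordinates in `S` -/
noncomputable def resS (F : Type) [Field F] {n : ℕ} (S : Finset (Fin n)) :
    (Fin n → F) →ₗ[F] (↥S → F) :=
  LinearMap.funLeft F F (fun s : ↥S => (s : Fin n))

lemma VI_eq_ker (S : Finset (Fin n)) : VI F n Sᶜ = LinearMap.ker (resS F S) := by
  ext x
  simp only [mem_VI, LinearMap.mem_ker, resS, LinearMap.funLeft_apply, funext_iff]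
  constructor
  · intro h s; exact h s (by simp)
  · intro h i hi
    exact h ⟨i, by simpa using hi⟩

lemma finrank_VI (S : Finset (Fin n)) :
    Module.finrank F ↥(VI F n S) = S.card := by
  have hbij : Function.Bijective ((resS F S).comp (VI F n S).subtype) := by
    constructor
    · intro ⟨x, hx⟩ ⟨y, hy⟩ hxy
      simp only [LinearMap.comp_apply, Submodule.subtype_apply, resS,
        LinearMap.funLeft_apply, funext_iff] at hxy
      ext i
      by_cases hi : i ∈ S
      · exact hxy ⟨i, hi⟩
      · show x i = y i
        rw [mem_VI] at hx hy; rw [hx i hi, hy i hi]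
    · intro y
      refine ⟨⟨fun i => if h : i ∈ S then y ⟨i, h⟩ else 0, ?_⟩, ?_⟩
      · rw [mem_VI]; intro i hi; simp [hi]
      · ext s; simp [resS]
  have e := LinearEquiv.ofBijective _ hbij
  rw [e.finrank_eq]
  simp [Module.finrank_pi]

open Module

lemma finrank_comap_subtype (C K : Submodule F (Fin n → F)) :
    finrank F ↥(Submodule.comap C.subtype K) = finrank F ↥(C ⊓ K) := by
  have h1 : Submodule.comap C.subtype K = Submodule.comap C.subtype (C ⊓ K) := by
    rw [Submodule.comap_inf]
    have : Submodule.comap C.subtype C = ⊤ := by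
      rw [eq_top_iff]; intro x _; exact x.2
    rw [this, top_inf_eq]
  rw [h1, (Submodule.comapSubtypeEquivOfLe inf_le_left).finrank_eq]

/-- rank-nullity style bound -/
lemma finrank_le_inf_ker (C : Submodule F (Fin n → F)) (S : Finset (Fin n)) :
    finrank F ↥C ≤ finrank F ↥(C ⊓ VI F n Sᶜ) + S.card := by
  have h := LinearMap.finrank_range_add_finrank_ker ((resS F S).comp C.subtype)
  rw [LinearMap.ker_comp, finrank_comap_subtype, ← VI_eq_ker] at h
  have h2 : finrank F ↥(LinearMap.range ((resS F S).comp C.subtype)) ≤ S.card := by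
    have := Submodule.finrank_le (LinearMap.range ((resS F S).comp C.subtype))
    simpa [Module.finrank_pi] using this
  omega

/-- key rank computation: cutting by one coordinate functional -/
lemma finrank_inf_single (C : Submodule F (Fin n → F)) (i : Fin n)
    (x : Fin n → F) (hxC : x ∈ C) (hi : x i ≠ 0) :
    finrank F ↥(C ⊓ VI F n ({i}ᶜ)) + 1 = finrank F ↥C := by
  have h := LinearMap.finrank_range_add_finrank_ker ((resS F {i}).comp C.subtype)
  rw [LinearMap.ker_comp, finrank_comap_subtype, ← VI_eq_ker] at h
  have hrange : finrank F ↥(LinearMap.range ((resS F {i}).comp C.subtype)) = 1 := by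
    have hle : finrank F ↥(LinearMap.range ((resS F {i}).comp C.subtype)) ≤ 1 := by
      have := Submodule.finrank_le (LinearMap.range ((resS F {i}).comp C.subtype))
      simpa [Module.finrank_pi] using this
    have hne : LinearMap.range ((resS F {i}).comp C.subtype) ≠ ⊥ := by
      intro h0
      rw [LinearMap.range_eq_bot] at h0
      have := congrFun (congrFun (congrArg DFunLike.coe h0) ⟨x, hxC⟩) ⟨i, by simp⟩
      simp [resS] at this
      exact hi this
    have := Submodule.one_le_finrank_iff.mpr hne
    omega
  omega

/-- existence of an "information set" for `C` -/
lemma exists_info_set (C : Submodule F (Fin n → F)) :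
    ∃ S : Finset (Fin n), S.card ≤ finrank F ↥C ∧
      ∀ y ∈ C, (∀ s ∈ S, y s = 0) → y = 0 := by
  generalize hk : finrank F ↥C = k
  induction k generalizing C with
  | zero =>
    refine ⟨∅, by simp, fun y hy _ => ?_⟩
    have : C = ⊥ := Submodule.finrank_eq_zero.mp hk
    simpa [this] using hy
  | succ k ih =>
    have hC : C ≠ ⊥ := by
      intro h; rw [h] at hk; simp at hk
    obtain ⟨x, hxC, hx0⟩ := Submodule.exists_mem_ne_zero_of_ne_bot hC
    obtain ⟨i, hi⟩ : ∃ i, x i ≠ 0 := by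
      by_contra h; push_neg at h; exact hx0 (funext h)
    have hkC' : finrank F ↥(C ⊓ VI F n ({i}ᶜ)) = k := by
      have := finrank_inf_single C i x hxC hi
      omega
    obtain ⟨S', hS'card, hS'⟩ := ih _ hkC'
    refine ⟨insert i S', ?_, ?_⟩
    · calc (insert i S').card ≤ S'.card + 1 := Finset.card_insert_le _ _
        _ ≤ k + 1 := by omega
    · intro y hyC hy
      have hyi : y i = 0 := hy i (Finset.mem_insert_self _ _)
      have hyC' : y ∈ C ⊓ VI F n ({i}ᶜ) := by
        refine ⟨hyC, ?_⟩
        show y ∈ VI F n ({i}ᶜ)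
        rw [mem_VI]
        intro j hj
        simp at hj
        rw [hj]; exact hyi
      exact hS' y hyC' (fun s hs => hy s (Finset.mem_insert_of_mem hs))

lemma finrank_le_n (C : Submodule F (Fin n → F)) : finrank F ↥C ≤ n := by
  have := Submodule.finrank_le C
  simpa [Module.finrank_pi] using this

/-- relative Singleton bound -/
lemma RGHW_le_singleton (t : ℕ) (C1 C2 : Submodule F (Fin n → F)) (h21 : C2 ≤ C1)
    (ht : t ≤ finrank F ↥C1 - finrank F ↥C2) :
    RGHW F t C1 C2 ≤ n - finrank F ↥C1 + t := by
  set k1 := finrank F ↥C1 with hk1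
  set k2 := finrank F ↥C2 with hk2
  have hk21 : k2 ≤ k1 := Submodule.finrank_mono h21
  have hk1n : k1 ≤ n := finrank_le_n C1
  obtain ⟨S0, hS0card, hS0⟩ := exists_info_set C2
  obtain ⟨S, hS0S, -, hScard⟩ := Finset.exists_subsuperset_card_eq (Finset.subset_univ S0)
    (by omega : S0.card ≤ k1 - t) (by simp; omega)
  apply Nat.sInf_le
  refine ⟨Sᶜ, ?_, ?_⟩
  · rw [Finset.card_compl, hScard, Fintype.card_fin]; omega
  · have h2 : C2 ⊓ VI F n Sᶜ = ⊥ := by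
      rw [eq_bot_iff]
      rintro y ⟨hyC, hyV⟩
      replace hyV : ∀ i, i ∉ Sᶜ → y i = 0 := mem_VI.mp hyV
      have : y = 0 := hS0 y hyC (fun s hs => hyV s (by simp [hS0S hs]))
      simp [this]
    have h1 : k1 ≤ finrank F ↥(C1 ⊓ VI F n Sᶜ) + S.card := finrank_le_inf_ker C1 S
    rw [h2]
    have : finrank F ↥(⊥ : Submodule F (Fin n → F)) = 0 := finrank_bot F _
    rw [this]
    rw [hScard] at h1
    omega

section Pullback
variable (P : Fin n → Fin n)

lemma mem_map_funLeft (S : Finset (Fin n)) (x : Fin n → F) :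
    x ∈ Submodule.map (LinearMap.funLeft F F P) (VI F n S) ↔
      ∃ y ∈ VI F n S, x = y ∘ P := by
  constructor
  · rintro ⟨y, hy, rfl⟩; exact ⟨y, hy, rfl⟩
  · rintro ⟨y, hy, rfl⟩; exact ⟨y, hy, rfl⟩

lemma map_VI_inf (S I : Finset (Fin n)) :
    (Submodule.map (LinearMap.funLeft F F P) (VI F n S)) ⊓ VI F n I
      = Submodule.map (LinearMap.funLeft F F P)
          (VI F n (S.filter (fun s => ∀ i, P i = s → i ∈ I))) := by
  ext x
  simp only [Submodule.mem_inf, mem_map_funLeft]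
  constructor
  · rintro ⟨⟨y, hy, rfl⟩, hxI⟩
    replace hy := mem_VI.mp hy
    replace hxI := mem_VI.mp hxI
    refine ⟨fun s => if s ∈ S.filter (fun s => ∀ i, P i = s → i ∈ I) then y s else 0, ?_, ?_⟩
    · rw [mem_VI]; intro s hs; simp [hs]
    · funext i
      simp only [Function.comp_apply]
      by_cases h : P i ∈ S.filter (fun s => ∀ i, P i = s → i ∈ I)
      · simp [h]
      · simp only [h, if_neg, if_false]
        simp only [Finset.mem_filter, not_and, not_forall] at h
        by_cases hS : P i ∈ S
        · obtain ⟨i₀, hPi₀, hi₀⟩ := h hS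
          have := hxI i₀ hi₀
          simp only [Function.comp_apply, hPi₀] at this
          exact this
        · exact hy _ hS
  · rintro ⟨y, hy, rfl⟩
    replace hy := mem_VI.mp hy
    constructor
    · refine ⟨y, ?_, rfl⟩
      rw [mem_VI]
      intro s hs
      exact hy s (fun hmem => hs (Finset.mem_filter.mp hmem).1)
    · rw [mem_VI]
      intro i hi
      simp only [Function.comp_apply]
      by_contra hne
      have hPi : P i ∈ S.filter (fun s => ∀ i, P i = s → i ∈ I) := by
        by_contra h; exact hne (hy _ h)
      exact hi ((Finset.mem_filter.mp hPi).2 i rfl)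

lemma map_VI_finrank (S : Finset (Fin n)) (h : ∀ s ∈ S, ∃ i, P i = s) :
    finrank F ↥(Submodule.map (LinearMap.funLeft F F P) (VI F n S)) = S.card := by
  set f := (LinearMap.funLeft F F P).comp (VI F n S).subtype with hf
  have hrange : LinearMap.range f = Submodule.map (LinearMap.funLeft F F P) (VI F n S) := by
    rw [hf, LinearMap.range_comp, Submodule.range_subtype]
  have hker : LinearMap.ker f = ⊥ := by
    rw [eq_bot_iff]
    rintro ⟨y, hy⟩ hy0
    simp only [LinearMap.mem_ker, hf, LinearMap.comp_apply, Submodule.subtype_apply] at hy0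
    have hy' := mem_VI.mp hy
    have : y = 0 := by
      funext s
      by_cases hs : s ∈ S
      · obtain ⟨i, rfl⟩ := h s hs
        have := congrFun hy0 i
        simpa [LinearMap.funLeft_apply] using this
      · exact hy' s hs
    simp only [Submodule.mem_bot]
    exact Subtype.ext (by simpa using this)
  have hrn := LinearMap.finrank_range_add_finrank_ker f
  rw [hker, hrange] at hrn
  have : finrank F ↥(⊥ : Submodule F ↥(VI F n S)) = 0 := finrank_bot F _
  rw [this, Nat.add_zero] at hrn
  rw [hrn, finrank_VI]

end Pullback

lemma card_filter_val_lt (a : ℕ) (ha : a ≤ n) :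
    (Finset.univ.filter (fun s : Fin n => s.val < a)).card = a := by
  have : (Finset.univ.filter (fun s : Fin n => s.val < a)).card = (Finset.range a).card := by
    apply Finset.card_bij' (i := fun (s : Fin n) _ => s.val)
      (j := fun b hb => (⟨b, lt_of_lt_of_le (Finset.mem_range.mp hb) ha⟩ : Fin n))
    all_goals intro x hx
    all_goals simp_all
    exact Finset.mem_range.mp hx
  rw [this, Finset.card_range]

lemma construction (k2 m t : ℕ) (hm1 : 1 ≤ m) (hmn : k2 + m ≤ n) (htm : t ≤ m) :
    ∃ C1 C2 : Submodule F (Fin n → F), C2 ≤ C1 ∧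
      finrank F ↥C1 = k2 + m ∧ finrank F ↥C2 = k2 ∧
      n - k2 - (m - t) * ((n - k2) / m + 1) ≤ RGHW F t C1 C2 := by
  set B := (n - k2) / m + 1 with hB
  have hPdef : ∀ i : Fin n, ¬ i.val < k2 → k2 + ((i.val - k2) % m) < n := by
    intro i hi
    have := Nat.mod_lt (i.val - k2) hm1
    omega
  set P : Fin n → Fin n := fun i =>
    if h : i.val < k2 then i else ⟨k2 + ((i.val - k2) % m), hPdef i h⟩ with hP
  have hPval : ∀ i : Fin n, ¬ i.val < k2 → (P i).val = k2 + ((i.val - k2) % m) := by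
    intro i hi; simp [hP, hi]
  have hPlt : ∀ i : Fin n, i.val < k2 → P i = i := by
    intro i hi; simp [hP, hi]
  have hPid : ∀ s : Fin n, s.val < k2 + m → P s = s := by
    intro s hs
    by_cases h : s.val < k2
    · exact hPlt s h
    · apply Fin.ext
      rw [hPval s h]
      have : s.val - k2 < m := by omega
      rw [Nat.mod_eq_of_lt this]
      omega
  set S1 : Finset (Fin n) := Finset.univ.filter (fun s => s.val < k2 + m) with hS1
  set S2 : Finset (Fin n) := Finset.univ.filter (fun s => s.val < k2) with hS2
  have hS21 : S2 ⊆ S1 := by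
    intro s hs
    simp only [hS1, hS2, Finset.mem_filter, Finset.mem_univ, true_and] at *
    omega
  have hS1card : S1.card = k2 + m := card_filter_val_lt _ hmn
  have hS2card : S2.card = k2 := card_filter_val_lt _ (by omega)
  have hsurj1 : ∀ s ∈ S1, ∃ i, P i = s := by
    intro s hs
    exact ⟨s, hPid s (by simpa [hS1] using hs)⟩
  set L := LinearMap.funLeft F F P with hL
  refine ⟨Submodule.map L (VI F n S1), Submodule.map L (VI F n S2),
    Submodule.map_mono (VI_mono hS21), ?_, ?_, ?_⟩
  · rw [map_VI_finrank P S1 hsurj1, hS1card]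
  · rw [map_VI_finrank P S2 (fun s hs => hsurj1 s (hS21 hs)), hS2card]
  · apply le_csInf
    · refine ⟨n, Finset.univ, by simp, ?_⟩
      rw [VI_univ, inf_top_eq, inf_top_eq,
        map_VI_finrank P S1 hsurj1, map_VI_finrank P S2 (fun s hs => hsurj1 s (hS21 hs)),
        hS1card, hS2card]
      omega
    · rintro c ⟨I, hIcard, hI⟩
      rw [map_VI_inf, map_VI_inf,
        map_VI_finrank P _ (fun s hs => hsurj1 s (Finset.filter_subset _ _ hs)),
        map_VI_finrank P _ (fun s hs => hsurj1 s (hS21 (Finset.filter_subset _ _ hs)))] at hI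
      set G : Fin n → Prop := fun s => ∀ i, P i = s → i ∈ I with hG
      have hsplit : (S1.filter G).card = (S2.filter G).card + ((S1 \ S2).filter G).card := by
        conv_lhs => rw [← Finset.union_sdiff_of_subset hS21]
        rw [Finset.filter_union]
        exact Finset.card_union_of_disjoint
          (Finset.disjoint_filter_filter Finset.disjoint_sdiff)
      set T := (S1 \ S2).filter G with hT
      have hTt : t ≤ T.card := by
        have h2 : (Finset.filter G S2).card + t ≤ (Finset.filter G S1).card :=
          le_trans (Nat.add_le_add_right (le_of_eq
            (congrArg Finset.card (Finset.filter_congr (fun x _ => Iff.rfl)))) t) hI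
        omega
      have hTsub : T ⊆ S1 \ S2 := Finset.filter_subset _ _
      have hS12card : (S1 \ S2).card = m := by
        rw [Finset.card_sdiff_of_subset hS21, hS1card, hS2card]; omega
      have hTbad : ((S1 \ S2) \ T).card ≤ m - t := by
        rw [Finset.card_sdiff_of_subset hTsub, hS12card]; omega
      set Jc : Finset (Fin n) := Finset.univ.filter (fun i => ¬ i.val < k2) with hJc
      have hJccard : Jc.card = n - k2 := by
        have := Finset.card_filter_add_card_filter_not
          (s := (Finset.univ : Finset (Fin n))) (p := fun i : Fin n => i.val < k2)
        simp only [Finset.card_univ, Fintype.card_fin] at this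
        rw [hJc]
        have h2 : (Finset.univ.filter (fun i : Fin n => i.val < k2)).card = k2 := hS2card
        omega
      -- fiber bound
      have hfiber : ∀ s : Fin n, (Jc.filter (fun i => P i = s)).card ≤ B := by
        intro s
        have : (Jc.filter (fun i => P i = s)).card ≤ (Finset.range B).card := by
          apply Finset.card_le_card_of_injOn (fun i => (i.val - k2) / m)
          · intro i hi
            simp only [hJc, Finset.mem_coe, Finset.mem_filter, Finset.mem_univ, true_and] at hi
            simp only [Finset.mem_coe, Finset.mem_range, hB]
            have h1 : i.val - k2 ≤ n - k2 := by omega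
            have := Nat.div_le_div_right (c := m) h1
            omega
          · intro i hi j hj hij
            simp only [hJc, Finset.mem_coe, Finset.mem_filter, Finset.mem_univ, true_and] at hi hj
            obtain ⟨hik, hiP⟩ := hi
            obtain ⟨hjk, hjP⟩ := hj
            have hij' : (i.val - k2) / m = (j.val - k2) / m := hij
            have h1 : (P i).val = (P j).val := by rw [hiP, hjP]
            rw [hPval i hik, hPval j hjk] at h1
            have h2 : (i.val - k2) % m = (j.val - k2) % m := by omega
            have h5 : i.val - k2 = j.val - k2 := by
              calc i.val - k2 = m * ((i.val - k2) / m) + (i.val - k2) % m :=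
                    (Nat.div_add_mod _ m).symm
                _ = m * ((j.val - k2) / m) + (j.val - k2) % m := by rw [hij', h2]
                _ = j.val - k2 := Nat.div_add_mod _ m
            apply Fin.ext
            omega
        simpa using this
      set A := Jc.filter (fun i => P i ∈ T) with hA
      have hAI : A ⊆ I := by
        intro i hi
        simp only [hA, Finset.mem_filter] at hi
        have := (Finset.mem_filter.mp hi.2).2
        exact this i rfl
      have hbadsub : Jc.filter (fun i => P i ∉ T) ⊆
          ((S1 \ S2) \ T).biUnion (fun s => Jc.filter (fun i => P i = s)) := by
        intro i hi
        simp only [Finset.mem_filter, hJc, Finset.mem_univ, true_and] at hi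
        obtain ⟨hik, hiT⟩ := hi
        rw [Finset.mem_biUnion]
        refine ⟨P i, ?_, ?_⟩
        · rw [Finset.mem_sdiff]
          refine ⟨?_, hiT⟩
          rw [Finset.mem_sdiff]
          constructor
          · simp only [hS1, Finset.mem_filter, Finset.mem_univ, true_and]
            rw [hPval i hik]
            have := Nat.mod_lt (i.val - k2) hm1
            omega
          · simp only [hS2, Finset.mem_filter, Finset.mem_univ, true_and]
            rw [hPval i hik]
            omega
        · simp only [hJc, Finset.mem_filter, Finset.mem_univ, true_and]
          simpa using hik
      have hbad : (Jc.filter (fun i => P i ∉ T)).card ≤ (m - t) * B := by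
        calc (Jc.filter (fun i => P i ∉ T)).card
            ≤ (((S1 \ S2) \ T).biUnion (fun s => Jc.filter (fun i => P i = s))).card :=
              Finset.card_le_card hbadsub
          _ ≤ ∑ s ∈ (S1 \ S2) \ T, (Jc.filter (fun i => P i = s)).card :=
              Finset.card_biUnion_le
          _ ≤ ((S1 \ S2) \ T).card * B := by
              rw [← smul_eq_mul]
              exact Finset.sum_le_card_nsmul _ _ B (fun s _ => hfiber s)
          _ ≤ (m - t) * B := Nat.mul_le_mul_right B hTbad
      have hsum := Finset.card_filter_add_card_filter_not
        (s := Jc) (p := fun i => P i ∈ T)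
      have hcardI := Finset.card_le_card hAI
      rw [hIcard] at hcardI
      rw [hA] at hcardI
      omega


end Helpers

set_option maxHeartbeats 1000000 in
/-- Corollary 1 (case `τ = R₁ - R₂`): `δ_q(τ, R₁, R₂) = 1 + τ - R₁`. -/
theorem delta_eq_tau_eq_diff (F : Type) [Field F] [Fintype F]
    (τ R1 R2 : ℝ) (hR20 : 0 ≤ R2) (hR21 : R2 < R1) (hR11 : R1 ≤ 1)
    (hdiff : R1 - R2 ≤ 1) (hτ : τ = R1 - R2) :
    Filter.limsup (fun n : ℕ =>
        sSup {r : ℝ | ∃ (t d : ℕ) (C₁ C₂ : Submodule F (Fin n → F)), C₂ ≤ C₁ ∧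
          1 ≤ t ∧ (t : ℝ) ≤ (n : ℝ) * τ ∧
          t ≤ Module.finrank F C₁ - Module.finrank F C₂ ∧
          (Module.finrank F C₁ : ℝ) ≥ (n : ℝ) * R1 ∧
          (Module.finrank F C₂ : ℝ) ≤ (n : ℝ) * R2 ∧
          RGHW F t C₁ C₂ ≥ d ∧ r = (d : ℝ) / n})
      Filter.atTop = 1 + τ - R1 := by
  have hτpos : 0 < τ := by rw [hτ]; linarith
  set b : ℝ := 1 + τ - R1 with hb
  have hbval : b = 1 - R2 := by rw [hb, hτ]; ring
  have hb0 : 0 < b := by rw [hbval]; linarith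
  set Sset : ℕ → Set ℝ := fun n =>
    {r : ℝ | ∃ (t d : ℕ) (C₁ C₂ : Submodule F (Fin n → F)), C₂ ≤ C₁ ∧
      1 ≤ t ∧ (t : ℝ) ≤ (n : ℝ) * τ ∧
      t ≤ Module.finrank F C₁ - Module.finrank F C₂ ∧
      (Module.finrank F C₁ : ℝ) ≥ (n : ℝ) * R1 ∧
      (Module.finrank F C₂ : ℝ) ≤ (n : ℝ) * R2 ∧
      RGHW F t C₁ C₂ ≥ d ∧ r = (d : ℝ) / n} with hSset
  change Filter.limsup (fun n : ℕ => sSup (Sset n)) Filter.atTop = b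
  -- Part A: every element is in [0, b]
  have hA : ∀ (n : ℕ) (r : ℝ), r ∈ Sset n → r ≤ b := by
    rintro n r ⟨t, d, C1, C2, h21, ht1, htτ, htk, hk1, hk2, hd, rfl⟩
    rcases Nat.eq_zero_or_pos n with hn | hn
    · exfalso
      subst hn
      have : (1 : ℝ) ≤ (t : ℝ) := by exact_mod_cast ht1
      simp only [Nat.cast_zero, zero_mul] at htτ
      linarith
    · have hnR : (0 : ℝ) < n := by exact_mod_cast hn
      have hsing := RGHW_le_singleton t C1 C2 h21 htk
      have hk1n : Module.finrank F ↥C1 ≤ n := finrank_le_n C1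
      have hdle : d ≤ n - Module.finrank F ↥C1 + t := le_trans hd hsing
      have hdleR : (d : ℝ) ≤ (n : ℝ) - (Module.finrank F ↥C1 : ℝ) + t := by
        have := (Nat.cast_le (α := ℝ)).mpr hdle
        push_cast [hk1n] at this
        linarith
      rw [div_le_iff₀ hnR]
      have : (n : ℝ) - (Module.finrank F ↥C1 : ℝ) + t ≤ b * n := by
        have h1 : (Module.finrank F ↥C1 : ℝ) ≥ (n : ℝ) * R1 := hk1
        have h2 : (t : ℝ) ≤ (n : ℝ) * τ := htτ
        rw [hb]; nlinarith
      linarith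
  have hA0 : ∀ n : ℕ, (0 : ℝ) ≤ sSup (Sset n) := by
    intro n
    apply Real.sSup_nonneg
    rintro r ⟨t, d, C1, C2, -, -, -, -, -, -, -, rfl⟩
    positivity
  have hAle : ∀ n : ℕ, sSup (Sset n) ≤ b := fun n => Real.sSup_le (hA n) hb0.le
  apply le_antisymm
  · have hbdd : Filter.IsBoundedUnder (· ≥ ·) Filter.atTop (fun n : ℕ => sSup (Sset n)) :=
      Filter.isBoundedUnder_of ⟨0, fun n => hA0 n⟩
    exact Filter.limsup_le_of_le hbdd.isCoboundedUnder_le (Filter.Eventually.of_forall hAle)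
  -- Part C : lower bound
  · have key : ∀ ε : ℝ, 0 < ε →
        b - ε ≤ Filter.limsup (fun n : ℕ => sSup (Sset n)) Filter.atTop := by
      intro ε hε
      set K : ℝ := 3 * (1 / τ + 1) with hK
      have hKpos : 0 < K := by positivity
      have hbdd2 : Filter.IsBoundedUnder (· ≤ ·) Filter.atTop (fun n : ℕ => sSup (Sset n)) :=
        Filter.isBoundedUnder_of ⟨b, fun n => hAle n⟩
      apply Filter.le_limsup_of_frequently_le _ hbdd2
      apply Filter.Eventually.frequently
      obtain ⟨N, hN⟩ := exists_nat_gt (max (1 / τ) (K / ε))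
      rw [Filter.eventually_atTop]
      refine ⟨N + 1, fun n hn => ?_⟩
      have hnN : (N : ℝ) < n := by exact_mod_cast Nat.lt_of_lt_of_le (Nat.lt_succ_self N) hn
      have hn1 : 1 ≤ n := le_trans (Nat.le_add_left 1 N) hn
      have hnR : (0 : ℝ) < n := by
        have : (0:ℝ) ≤ N := Nat.cast_nonneg N
        linarith
      have hnτ : 1 ≤ (n : ℝ) * τ := by
        have h1 : 1 / τ < (n : ℝ) := lt_of_lt_of_le (lt_of_le_of_lt (le_max_left _ _) hN) hnN.le
        rw [div_lt_iff₀ hτpos] at h1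
        linarith
      have hnK : K / ε ≤ (n : ℝ) :=
        le_of_lt (lt_of_lt_of_le (lt_of_le_of_lt (le_max_right _ _) hN) hnN.le)
      -- parameters
      set t : ℕ := ⌊(n : ℝ) * τ⌋₊ with htdef
      set k1 : ℕ := ⌈(n : ℝ) * R1⌉₊ with hk1def
      set k2 : ℕ := ⌊(n : ℝ) * R2⌋₊ with hk2def
      have ht1 : 1 ≤ t := Nat.le_floor (by exact_mod_cast hnτ)
      have htτ : (t : ℝ) ≤ (n : ℝ) * τ := Nat.floor_le (mul_nonneg (Nat.cast_nonneg n) hτpos.le)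
      have hk1ge : (n : ℝ) * R1 ≤ (k1 : ℝ) := Nat.le_ceil _
      have hk1le : (k1 : ℝ) < (n : ℝ) * R1 + 1 := Nat.ceil_lt_add_one (mul_nonneg (Nat.cast_nonneg n) (by linarith))
      have hk2le : (k2 : ℝ) ≤ (n : ℝ) * R2 := Nat.floor_le (mul_nonneg (Nat.cast_nonneg n) hR20)
      have hk2ge : (n : ℝ) * R2 - 1 < (k2 : ℝ) := by
        have := Nat.lt_floor_add_one ((n : ℝ) * R2)
        linarith
      have hk2k1 : k2 ≤ k1 := by
        have : (k2 : ℝ) ≤ (k1 : ℝ) := by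
          calc (k2 : ℝ) ≤ (n : ℝ) * R2 := hk2le
            _ ≤ (n : ℝ) * R1 := by nlinarith
            _ ≤ k1 := hk1ge
        exact_mod_cast this
      set m : ℕ := k1 - k2 with hmdef
      have hmcast : (m : ℝ) = (k1 : ℝ) - (k2 : ℝ) := by
        rw [hmdef]; push_cast [hk2k1]; ring
      have hmge : (n : ℝ) * τ ≤ (m : ℝ) := by
        rw [hmcast, hτ]; nlinarith
      have htm : t ≤ m := by
        have : (t : ℝ) ≤ (m : ℝ) := le_trans htτ hmge
        exact_mod_cast this
      have hm1 : 1 ≤ m := le_trans ht1 htm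
      have hk1n : k1 ≤ n := Nat.ceil_le.mpr (by nlinarith)
      have hmn : k2 + m ≤ n := by omega
      obtain ⟨C1, C2, hsub, hdim1, hdim2, hRG⟩ := construction (F := F) k2 m t hm1 hmn htm
      set d : ℕ := n - k2 - (m - t) * ((n - k2) / m + 1) with hddef
      have hmem : (d : ℝ) / n ∈ Sset n := by
        refine ⟨t, d, C1, C2, hsub, ht1, htτ, ?_, ?_, ?_, hRG, rfl⟩
        · rw [hdim1, hdim2]; omega
        · rw [hdim1]
          push_cast
          have : (k2 : ℝ) + m = k1 := by rw [hmcast]; ring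
          rw [this]; exact hk1ge
        · rw [hdim2]; exact hk2le
      have hle1 : (d : ℝ) / n ≤ sSup (Sset n) := le_csSup ⟨b, fun r hr => hA n r hr⟩ hmem
      -- now estimate d
      have hmpos : (0 : ℝ) < m := by
        have : (0:ℝ) < (n:ℝ) * τ := mul_pos hnR hτpos
        linarith
      have hgle : ((m - t : ℕ) : ℝ) ≤ 3 := by
        have h1 : ((m - t : ℕ) : ℝ) = (m : ℝ) - t := by push_cast [htm]; ring
        rw [h1, hmcast]
        have h2 : (n : ℝ) * τ - 1 < t := by
          rw [htdef]
          have h := Nat.lt_floor_add_one ((n : ℝ) * τ)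
          push_cast
          linarith
        rw [hτ] at h2
        linarith
      have hBle : (((n - k2) / m + 1 : ℕ) : ℝ) ≤ 1 / τ + 1 := by
        push_cast
        have h1 : (((n - k2) / m : ℕ) : ℝ) ≤ ((n - k2 : ℕ) : ℝ) / (m : ℝ) := Nat.cast_div_le
        have h2 : ((n - k2 : ℕ) : ℝ) ≤ (n : ℝ) := by
          have : n - k2 ≤ n := Nat.sub_le _ _
          exact_mod_cast this
        have h3 : ((n - k2 : ℕ) : ℝ) / (m : ℝ) ≤ (n : ℝ) / (m : ℝ) :=
          (div_le_div_iff_of_pos_right hmpos).mpr h2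
        have h4 : (n : ℝ) / (m : ℝ) ≤ (n : ℝ) / ((n : ℝ) * τ) := by
          exact div_le_div_of_nonneg_left hnR.le (mul_pos hnR hτpos) hmge
        have h5 : (n : ℝ) / ((n : ℝ) * τ) = 1 / τ := by
          field_simp
        linarith
      have hcle : (((m - t) * ((n - k2) / m + 1) : ℕ) : ℝ) ≤ K := by
        rw [hK]
        push_cast
        have := mul_le_mul hgle hBle (by positivity) (by norm_num)
        convert this using 2 <;> push_cast <;> rfl
      have hdge : (n : ℝ) - (k2 : ℝ) - K ≤ (d : ℝ) := by
        rw [hddef]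
        rcases le_or_gt ((m - t) * ((n - k2) / m + 1)) (n - k2) with h | h
        · rw [Nat.cast_sub h, Nat.cast_sub (by omega : k2 ≤ n)]
          push_cast at hcle ⊢
          linarith
        · have h0 : n - k2 - (m - t) * ((n - k2) / m + 1) = 0 := by omega
          rw [h0]
          have h6 : ((n - k2 : ℕ) : ℝ) < (((m - t) * ((n - k2) / m + 1) : ℕ) : ℝ) := by
            exact_mod_cast h
          have h7 : ((n - k2 : ℕ) : ℝ) = (n : ℝ) - k2 := by
            rw [Nat.cast_sub (by omega : k2 ≤ n)]
          push_cast
          linarith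
      have hfinal : b - ε ≤ (d : ℝ) / n := by
        rw [le_div_iff₀ hnR]
        have hKn : K ≤ (n : ℝ) * ε := by
          rw [div_le_iff₀ hε] at hnK
          linarith
        rw [hbval]
        nlinarith
      exact le_trans hfinal hle1
    by_contra hcon
    push_neg at hcon
    have := key ((b - Filter.limsup (fun n : ℕ => sSup (Sset n)) Filter.atTop) / 2)
      (by linarith)
    linarith
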